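/- arXiv:1105.3870 — 2 statements merged into one kernel-verified Lean document; each statement's English description precedes it below -/
import Mathlib

section
/- For any a, b ∈ ℝⁿ and p ∈ [2, ∞), there exists a constant c_p ∈ (0,1] (depending only on p) such that (|a|^{p−2}a − |b|^{p−2}b)·(a − b) ≥ c_p |a − b|^p. -/
open EuclideanSpace

/-- For `p ∈ [2, ∞)` there is a constant `c_p ∈ (0,1]` such that for all `a, b ∈ ℝⁿ`,
`⟨|a|^{p-2} a - |b|^{p-2} b, a - b⟩ ≥ c_p |a - b|^p`. -/
theorem stmt4 (n : ℕ) (p : ℝ) (hp : 2 ≤ p) :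
    ∃ c : ℝ, 0 < c ∧ c ≤ 1 ∧
      ∀ a b : EuclideanSpace ℝ (Fin n),
        c * ‖a - b‖ ^ p ≤
          inner ℝ ((‖a‖ ^ (p - 2) : ℝ) • a - (‖b‖ ^ (p - 2) : ℝ) • b) (a - b) := by
  refine ⟨(1/2 : ℝ) ^ (p - 1), by positivity, ?_, ?_⟩
  · calc (1/2 : ℝ) ^ (p - 1) ≤ (1/2 : ℝ) ^ (0 : ℝ) := by
          apply Real.rpow_le_rpow_of_exponent_ge (by norm_num) (by norm_num) (by linarith)
      _ = 1 := Real.rpow_zero _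
  · intro a b
    set s := ‖a‖ with hs
    set t := ‖b‖ with ht
    set d := ‖a - b‖ with hd
    have hs0 : 0 ≤ s := norm_nonneg a
    have ht0 : 0 ≤ t := norm_nonneg b
    have hd0 : 0 ≤ d := norm_nonneg _
    have hq : 0 ≤ p - 2 := by linarith
    -- expand inner product
    have hinner : (inner ℝ ((s ^ (p - 2) : ℝ) • a - (t ^ (p - 2) : ℝ) • b) (a - b) : ℝ)
        = s ^ (p-2) * s ^ 2 + t ^ (p-2) * t ^ 2
          - (s ^ (p-2) + t ^ (p-2)) * (inner ℝ a b : ℝ) := by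
      simp only [inner_sub_left, inner_sub_right, real_inner_smul_left,
        real_inner_self_eq_norm_sq, real_inner_comm b a]
      ring
    have hdsq : d ^ 2 = s ^ 2 - 2 * (inner ℝ a b : ℝ) + t ^ 2 := by
      rw [hd, hs, ht]; exact norm_sub_sq_real a b
    -- monotonicity fact
    have hmono : 0 ≤ (s ^ (p-2) - t ^ (p-2)) * (s ^ 2 - t ^ 2) := by
      rcases le_total s t with h | h
      · have h1 : s ^ (p-2) ≤ t ^ (p-2) := Real.rpow_le_rpow hs0 h hq
        have h2 : s ^ 2 ≤ t ^ 2 := by nlinarith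
        nlinarith
      · have h1 : t ^ (p-2) ≤ s ^ (p-2) := Real.rpow_le_rpow ht0 h hq
        have h2 : t ^ 2 ≤ s ^ 2 := by nlinarith
        nlinarith
    -- key: inner ≥ (x+y)/2 * d^2
    have hkey : (s ^ (p-2) + t ^ (p-2)) / 2 * d ^ 2
        ≤ (inner ℝ ((s ^ (p - 2) : ℝ) • a - (t ^ (p - 2) : ℝ) • b) (a - b) : ℝ) := by
      rw [hinner, hdsq]; nlinarith
    rcases eq_or_lt_of_le hd0 with hdz | hdp
    · have : d ^ p = 0 := by
        rw [← hdz]; exact Real.zero_rpow (by linarith)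
      rw [this, mul_zero]
      refine le_trans ?_ hkey
      rw [← hdz]; positivity
    · -- d > 0
      have hsum : 0 < s + t := by
        by_contra h
        push_neg at h
        have hs' : s = 0 := le_antisymm (by linarith) hs0
        have ht' : t = 0 := le_antisymm (by linarith) ht0
        have : a = 0 := norm_eq_zero.mp hs'
        have hb : b = 0 := norm_eq_zero.mp ht'
        rw [this, hb] at hd
        simp at hd
        exact absurd hd (by rw [hd] at hdp; exact absurd hdp (lt_irrefl 0))
      have hdp2 : d ^ p = d ^ (p - 2) * d ^ 2 := by
        rw [show (d:ℝ) ^ 2 = d ^ ((2:ℕ):ℝ) from (Real.rpow_natCast d 2).symm,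
          ← Real.rpow_add hdp]
        norm_num
      -- d^(p-2) ≤ 2^(p-2) * (s^(p-2)+t^(p-2))
      have hM : d ^ (p-2) ≤ (2:ℝ) ^ (p-2) * (s ^ (p-2) + t ^ (p-2)) := by
        have h1 : d ≤ s + t := norm_sub_le a b
        have h2 : d ^ (p-2) ≤ (s + t) ^ (p-2) := Real.rpow_le_rpow hd0 h1 hq
        have h3 : s + t ≤ 2 * max s t := by
          rcases le_total s t with h | h <;> simp [max_eq_right, max_eq_left, h] <;> linarith
        have h4 : (s + t) ^ (p-2) ≤ (2 * max s t) ^ (p-2) :=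
          Real.rpow_le_rpow (by linarith) h3 hq
        have h5 : (2 * max s t) ^ (p-2) = (2:ℝ) ^ (p-2) * (max s t) ^ (p-2) :=
          Real.mul_rpow (by norm_num) (le_max_of_le_left hs0)
        have h6 : (max s t) ^ (p-2) ≤ s ^ (p-2) + t ^ (p-2) := by
          rcases max_cases s t with ⟨hm, _⟩ | ⟨hm, _⟩ <;> rw [hm]
          · nlinarith [Real.rpow_nonneg ht0 (p-2)]
          · nlinarith [Real.rpow_nonneg hs0 (p-2)]
        calc d ^ (p-2) ≤ (s + t) ^ (p-2) := h2
          _ ≤ (2 * max s t) ^ (p-2) := h4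
          _ = (2:ℝ) ^ (p-2) * (max s t) ^ (p-2) := h5
          _ ≤ (2:ℝ) ^ (p-2) * (s ^ (p-2) + t ^ (p-2)) := by
              exact mul_le_mul_of_nonneg_left h6 (Real.rpow_nonneg (by norm_num) _)
      have hc : (1/2 : ℝ) ^ (p - 1) * (2:ℝ) ^ (p-2) = 1/2 := by
        rw [show (1/2 : ℝ) = (2:ℝ) ^ (-1:ℝ) by norm_num [Real.rpow_neg_one],
          ← Real.rpow_mul (by norm_num), ← Real.rpow_add (by norm_num),
          show (-1:ℝ) * (p-1) + (p-2) = -1 by ring, Real.rpow_neg_one]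
      calc (1/2 : ℝ) ^ (p - 1) * d ^ p
          = ((1/2 : ℝ) ^ (p - 1) * d ^ (p-2)) * d ^ 2 := by rw [hdp2]; ring
        _ ≤ ((1/2 : ℝ) ^ (p - 1) * ((2:ℝ) ^ (p-2) * (s ^ (p-2) + t ^ (p-2)))) * d ^ 2 := by
            have := mul_le_mul_of_nonneg_left hM (le_of_lt (by positivity : (0:ℝ) < (1/2:ℝ) ^ (p-1)))
            exact mul_le_mul_of_nonneg_right this (by positivity)
        _ = (s ^ (p-2) + t ^ (p-2)) / 2 * d ^ 2 := by
            rw [← mul_assoc, hc]; ring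
        _ ≤ _ := hkey
end

section
/- Let (X, Σ, ν) be a measure space and B: X × ℝ → [0,∞] a Musielak-Orlicz function satisfying the (∇₂⁰)-condition: there is a ν-null set X₀ and, for every ε > 0, a constant α(ε) > 0 such that B(x, α t) ≤ α ε B(x, t) for all t ∈ ℝ and x ∈ X∖X₀. Then for the modular ρ_B(u) := ∫_X B(x, u(x)) dν and the Luxemburg norm ‖u‖_B := inf{λ > 0 : ρ_B(u/λ) ≤ 1}, one has ρ_B(u)/‖u‖_B → +∞ as ‖u‖_B → +∞. -/
open MeasureTheory Filter Set

/-- If a Musielak-Orlicz function `B` satisfies the (∇₂⁰)-condition, then the modular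
`ρ_B(u) = ∫ B(x, u x) dν` dominates any multiple of the Luxemburg norm `‖u‖_B` for
functions of large norm: for every `λ > 0` there is `M > 0` such that `‖u‖_B > M`
implies `ρ_B(u) ≥ λ ‖u‖_B`. -/
theorem stmt11 {X : Type*} [MeasurableSpace X] (ν : Measure X)
    (B : X → ℝ → ℝ)
    (hmeas : ∀ t : ℝ, Measurable fun x => B x t)
    (hMO : ∀ᵐ x ∂ν,
      (∀ t, 0 ≤ B x t) ∧ (∀ t, B x (-t) = B x t) ∧ ConvexOn ℝ Set.univ (B x) ∧
        B x 0 = 0 ∧ ContinuousAt (B x) 0 ∧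
        Tendsto (fun t => B x t / t) atTop atTop)
    (hnabla : ∃ X₀ : Set X, ν X₀ = 0 ∧
      ∀ ε : ℝ, 0 < ε → ∃ a : ℝ, 0 < a ∧
        ∀ t : ℝ, ∀ x ∉ X₀, B x (a * t) ≤ a * ε * B x t) :
    ∀ lam : ℝ, 0 < lam → ∃ M : ℝ, 0 < M ∧
      ∀ u : X → ℝ, Measurable u →
        M < sInf {k : ℝ | 0 < k ∧ ∫ x, B x (u x / k) ∂ν ≤ 1} →
        lam * sInf {k : ℝ | 0 < k ∧ ∫ x, B x (u x / k) ∂ν ≤ 1} ≤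
          ∫ x, B x (u x) ∂ν := by
  intro lam hlam
  obtain ⟨X₀, hX₀, hN⟩ := hnabla
  obtain ⟨a, ha, hBa⟩ := hN (1 / lam) (by positivity)
  refine ⟨max 1 (1 / a), lt_max_of_lt_left one_pos, ?_⟩
  intro u hu hM
  set S : Set ℝ := {k : ℝ | 0 < k ∧ ∫ x, B x (u x / k) ∂ν ≤ 1} with hSdef
  have hbdd : BddBelow S := ⟨0, fun y hy => hy.1.le⟩
  have hnot : ∀ k : ℝ, 0 < k → k < sInf S → 1 < ∫ x, B x (u x / k) ∂ν := by
    intro k hk hks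
    by_contra h
    exact absurd (csInf_le hbdd ⟨hk, le_of_not_gt h⟩) (not_le.2 hks)
  -- integrability of the target integrand, via k = 1
  have h1 : 1 < ∫ x, B x (u x) ∂ν := by
    have := hnot 1 one_pos (lt_of_le_of_lt (le_max_left _ _) hM)
    simpa using this
  have hint : Integrable (fun x => B x (u x)) ν := by
    by_contra h
    rw [integral_undef h] at h1
    linarith
  -- a.e. pointwise estimate
  have hX₀' : ∀ᵐ x ∂ν, x ∉ X₀ := by
    rw [ae_iff]
    simpa using hX₀
  have hae : ∀ᵐ x ∂ν, ∀ k : ℝ, max 1 (1 / a) ≤ k →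
      lam * k * B x (u x / k) ≤ B x (u x) := by
    filter_upwards [hMO, hX₀'] with x hx hxX
    obtain ⟨hpos, _, hconv, h0, _, _⟩ := hx
    intro k hk
    have hk0 : (0 : ℝ) < k := lt_of_lt_of_le one_pos (le_trans (le_max_left _ _) hk)
    have hak1 : (1 : ℝ) ≤ a * k := by
      have : 1 / a ≤ k := le_trans (le_max_right _ _) hk
      rw [div_le_iff₀ ha] at this
      linarith [this]
    have hak0 : (0 : ℝ) < a * k := lt_of_lt_of_le one_pos hak1
    set c : ℝ := a * k with hc
    set s : ℝ := u x / k with hs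
    -- convexity: c * B x s ≤ B x (c * s)
    have hw1 : (0:ℝ) ≤ 1 / c := by positivity
    have hw2 : (0:ℝ) ≤ 1 - 1 / c := by
      have : 1 / c ≤ 1 := (div_le_one hak0).mpr hak1
      linarith
    have hw3 : 1 / c + (1 - 1 / c) = 1 := by ring
    have h := hconv.2 (mem_univ (c * s)) (mem_univ (0 : ℝ)) hw1 hw2 hw3
    have heq : (1 / c) • (c * s) + (1 - 1 / c) • (0 : ℝ) = s := by
      have hcne : c ≠ 0 := ne_of_gt hak0
      simp only [smul_eq_mul, mul_zero, add_zero]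
      field_simp
    have hconv' : B x s ≤ (1 / c) * B x (c * s) + (1 - 1 / c) * B x 0 := by
      rw [heq] at h
      simpa [smul_eq_mul] using h
    have hcs : c * B x s ≤ B x (c * s) := by
      rw [h0] at hconv'
      have h4 := mul_le_mul_of_nonneg_left hconv' hak0.le
      have hc1 : c * ((1 / c) * B x (c * s) + (1 - 1 / c) * 0) = B x (c * s) := by
        field_simp
        simp
      rw [hc1] at h4
      exact h4
    have hcs' : c * s = a * u x := by
      rw [hc, hs]
      field_simp
    have h2 : B x (a * u x) ≤ a * (1 / lam) * B x (u x) := hBa (u x) x hxX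
    rw [hcs'] at hcs
    -- chain: c * B x s ≤ a/lam * B x (u x), i.e. lam*k*B x s ≤ B x (u x)
    have : a * k * B x s ≤ a * (1 / lam) * B x (u x) := le_trans hcs h2
    have h3 := mul_le_mul_of_nonneg_left this (le_of_lt (by positivity : (0:ℝ) < lam / a))
    calc lam * k * B x s = lam / a * (a * k * B x s) := by field_simp
      _ ≤ lam / a * (a * (1 / lam) * B x (u x)) := h3
      _ = B x (u x) := by field_simp
  -- key claim
  have key : ∀ k : ℝ, max 1 (1 / a) ≤ k → k < sInf S → lam * k < ∫ x, B x (u x) ∂ν := by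
    intro k hk hks
    have hk0 : (0 : ℝ) < k := lt_of_lt_of_le one_pos (le_trans (le_max_left _ _) hk)
    have hgt := hnot k hk0 hks
    have hgint : Integrable (fun x => B x (u x / k)) ν := by
      by_contra h
      rw [integral_undef h] at hgt
      linarith
    have hmono : ∫ x, lam * k * B x (u x / k) ∂ν ≤ ∫ x, B x (u x) ∂ν := by
      refine integral_mono_ae (hgint.const_mul _) hint ?_
      filter_upwards [hae] with x hx
      exact hx k hk
    rw [integral_const_mul] at hmono
    have : lam * k * 1 < lam * k * ∫ x, B x (u x / k) ∂ν :=
      (mul_lt_mul_iff_right₀ (by positivity)).mpr hgt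
    linarith
  -- conclude by approximating sInf S from below
  refine le_of_forall_lt fun c hc => ?_
  set k : ℝ := max (max 1 (1 / a)) (c / lam) with hk
  have hk1 : k < sInf S := by
    apply max_lt hM
    rw [div_lt_iff₀ hlam]
    linarith [hc]
  have hck : c ≤ lam * k := by
    have : c / lam ≤ k := le_max_right _ _
    rw [div_le_iff₀ hlam] at this
    linarith
  exact lt_of_le_of_lt hck (key k (le_max_left _ _) hk1)
end
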